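/- Assume the posterior likelihood function φ satisfies internal consistency [INC], and let C be a connected component of the graph of information G, with φ extended to all pairs of states in C. Then for every ω' ∈ C, the value μ_φ(ω' | C) := φ(ω', ω) / Σ_{ω'' ∈ C} φ(ω'', ω) does not depend on the choice of the base state ω ∈ C, and μ_φ(· | C) is a probability distribution on C. -/

import Mathlib

open Finset

/-- `ωs` (a sequence of `m+1` states) is a path of edges of `E`. -/
def IsPath {Ω : Type} (E : Ω → Ω → Prop) {m : ℕ} (ωs : Fin (m + 1) → Ω) : Prop :=
  ∀ i : Fin m, E (ωs i.castSucc) (ωs i.succ)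

/-- The product of the values of `φ` along the edges of the path `ωs`. -/
noncomputable def pathProd {Ω : Type} (φ : Ω → Ω → ℝ) {m : ℕ} (ωs : Fin (m + 1) → Ω) : ℝ :=
  ∏ i : Fin m, φ (ωs i.castSucc) (ωs i.succ)

/-- `ω ↠ ω'`: there is a finite path of edges of `E` from `ω` to `ω'`. -/
def Reach {Ω : Type} (E : Ω → Ω → Prop) (ω ω' : Ω) : Prop :=
  ∃ (m : ℕ) (ωs : Fin (m + 1) → Ω), IsPath E ωs ∧ ωs 0 = ω ∧ ωs (Fin.last m) = ω'

/-- Internal consistency [INC]: the product of `φ` along every F-cycle equals 1. -/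
def INCc {Ω : Type} (E F : Ω → Ω → Prop) (φ : Ω → Ω → ℝ) : Prop :=
  ∀ (m : ℕ) (ωs : Fin (m + 1) → Ω), IsPath E ωs → F (ωs 0) (ωs (Fin.last m)) →
    pathProd φ ωs = 1

section Aux

variable {Ω : Type} {E : Ω → Ω → Prop} {φ Φ : Ω → Ω → ℝ}

lemma pathProd_pos (hpos : ∀ ω ω', E ω ω' → 0 < φ ω ω') {m : ℕ} {ωs : Fin (m + 1) → Ω}
    (h : IsPath E ωs) : 0 < pathProd φ ωs :=
  Finset.prod_pos fun i _ => hpos _ _ (h i)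

lemma Phi_pos (hpos : ∀ ω ω', E ω ω' → 0 < φ ω ω')
    (hΦ : ∀ (m : ℕ) (ωs : Fin (m + 1) → Ω), IsPath E ωs →
      Φ (ωs 0) (ωs (Fin.last m)) = pathProd φ ωs)
    {a b : Ω} (h : Reach E a b) : 0 < Φ a b := by
  obtain ⟨m, ωs, hp, h0, hl⟩ := h
  rw [← h0, ← hl, hΦ m ωs hp]
  exact pathProd_pos hpos hp

lemma Phi_snoc
    (hΦ : ∀ (m : ℕ) (ωs : Fin (m + 1) → Ω), IsPath E ωs →
      Φ (ωs 0) (ωs (Fin.last m)) = pathProd φ ωs)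
    {a d c : Ω} (h : Reach E a d) (he : E d c) :
    Φ a c = Φ a d * φ d c ∧ Reach E a c := by
  obtain ⟨m, ωs, hp, h0, hl⟩ := h
  set ζ : Fin (m + 2) → Ω := Fin.snoc ωs c with hζ
  have e1 : ∀ j : Fin m, ζ j.castSucc.castSucc = ωs j.castSucc := by
    intro j; simp [hζ, Fin.snoc_castSucc]
  have e2 : ∀ j : Fin m, ζ j.castSucc.succ = ωs j.succ := by
    intro j; rw [show j.castSucc.succ = j.succ.castSucc from Fin.ext (by simp)]; rw [hζ]; exact Fin.snoc_castSucc (α := fun _ => Ω) c ωs _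
  have e3 : ζ (Fin.last m).castSucc = d := by simp [hζ, Fin.snoc_castSucc, hl]
  have e4 : ζ (Fin.last m).succ = c := by
    have h5 : (Fin.last m).succ = Fin.last (m + 1) := rfl
    simp [hζ, h5, Fin.snoc_last]
  have hpζ : IsPath E ζ := by
    intro i
    refine Fin.lastCases ?_ ?_ i
    · rw [e3, e4]; exact he
    · intro j; rw [e1 j, e2 j]; exact hp j
  have h0ζ : ζ 0 = a := by
    rw [hζ]
    exact (Fin.snoc_castSucc (α := fun _ => Ω) c ωs 0).trans h0
  have hlζ : ζ (Fin.last (m + 1)) = c := by simp [hζ, Fin.snoc_last]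
  have hprod : pathProd φ ζ = pathProd φ ωs * φ d c := by
    unfold pathProd
    rw [Fin.prod_univ_castSucc]
    congr 1
    · exact Finset.prod_congr rfl fun j _ => by rw [e1 j, e2 j]
    · rw [e3, e4]
  refine ⟨?_, ⟨m + 1, ζ, hpζ, h0ζ, hlζ⟩⟩
  have hc := hΦ (m + 1) ζ hpζ
  rw [h0ζ, hlζ] at hc
  rw [hc, hprod]
  congr 1
  rw [← h0, ← hl, hΦ m ωs hp]

lemma Phi_refl
    (hΦ : ∀ (m : ℕ) (ωs : Fin (m + 1) → Ω), IsPath E ωs →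
      Φ (ωs 0) (ωs (Fin.last m)) = pathProd φ ωs) (a : Ω) : Φ a a = 1 := by
  have h := hΦ 0 (fun _ => a) (fun i => i.elim0)
  simpa [pathProd] using h

lemma Phi_mul_aux
    (hΦ : ∀ (m : ℕ) (ωs : Fin (m + 1) → Ω), IsPath E ωs →
      Φ (ωs 0) (ωs (Fin.last m)) = pathProd φ ωs)
    {a : Ω} : ∀ (k : ℕ) (ωt : Fin (k + 1) → Ω), IsPath E ωt → Reach E a (ωt 0) →
      Φ a (ωt (Fin.last k)) = Φ a (ωt 0) * pathProd φ ωt ∧ Reach E a (ωt (Fin.last k)) := by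
  intro k
  induction k with
  | zero =>
      intro ωt _ hr
      have h0 : Fin.last 0 = (0 : Fin 1) := rfl
      rw [h0]
      simp [pathProd]
      exact hr
  | succ k ih =>
      intro ωt hp hr
      set ωt' : Fin (k + 1) → Ω := fun j => ωt j.castSucc with hωt'
      have hp' : IsPath E ωt' := by
        intro j
        have h := hp j.castSucc
        rwa [Fin.succ_castSucc] at h
      obtain ⟨ihe, ihr⟩ := ih ωt' hp' hr
      have hedge : E (ωt' (Fin.last k)) (ωt (Fin.last (k + 1))) := hp (Fin.last k)
      obtain ⟨he, hrc⟩ := Phi_snoc (φ := φ) hΦ ihr hedge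
      refine ⟨?_, hrc⟩
      rw [he, ihe]
      have hprod : pathProd φ ωt = pathProd φ ωt' * φ (ωt' (Fin.last k)) (ωt (Fin.last (k + 1))) := by
        unfold pathProd
        rw [Fin.prod_univ_castSucc]
        congr 1
      rw [hprod]
      have h00 : ωt' 0 = ωt 0 := rfl
      rw [h00, mul_assoc]

lemma Phi_mul
    (hΦ : ∀ (m : ℕ) (ωs : Fin (m + 1) → Ω), IsPath E ωs →
      Φ (ωs 0) (ωs (Fin.last m)) = pathProd φ ωs)
    {a b c : Ω} (h1 : Reach E a b) (h2 : Reach E b c) :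
    Φ a c = Φ a b * Φ b c := by
  obtain ⟨k, ωt, hp, h0, hl⟩ := h2
  have h1' : Reach E a (ωt 0) := h0 ▸ h1
  obtain ⟨he, -⟩ := Phi_mul_aux (φ := φ) hΦ k ωt hp h1'
  rw [← hl, he, h0]
  congr 1
  rw [← h0]
  exact (hΦ k ωt hp).symm

end Aux


/-- under [INC], for a connected component `C` and the extension `Φ`
of `φ` along paths (note `Φ ω ω = 1`), the value
`μ_φ(ω'|C) = Φ ω' ω / ∑_{ω''∈C} Φ ω'' ω` does not depend on the base state
`ω ∈ C`, and `μ_φ(·|C)` is a probability distribution on `C`. -/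
theorem stmt_3 {Ω : Type} [Fintype Ω] [Nonempty Ω] {n : ℕ} (hn : 2 ≤ n)
    (P : Fin n → Ω → Ω → Prop) (hP : ∀ i, Equivalence (P i))
    (F : Ω → Ω → Prop) (hF : Equivalence F)
    (E : Ω → Ω → Prop) (hE : ∀ ω ω', E ω ω' ↔ ∃ i, P i ω ω')
    (φ : Ω → Ω → ℝ)
    (hpos : ∀ ω ω', E ω ω' → 0 < φ ω ω')
    (hrec : ∀ ω ω', E ω ω' → φ ω ω' = 1 / φ ω' ω)
    (hINC : INCc E F φ)
    -- `C` is a connected component: nonempty, pairwise connected and maximal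
    (C : Finset Ω) (hC1 : C.Nonempty)
    (hC2 : ∀ ω ∈ C, ∀ ω' ∈ C, Reach E ω ω')
    (hC3 : ∀ ω ∈ C, ∀ ω', Reach E ω ω' → ω' ∈ C)
    -- `Φ` is the extension of `φ` along paths (in particular `Φ ω ω = 1`)
    (Φ : Ω → Ω → ℝ)
    (hΦ : ∀ (m : ℕ) (ωs : Fin (m + 1) → Ω), IsPath E ωs →
      Φ (ωs 0) (ωs (Fin.last m)) = pathProd φ ωs) :
    ∀ ω ∈ C, ∀ ω₁ ∈ C,
      (∀ ω' ∈ C, Φ ω' ω / (∑ ω'' ∈ C, Φ ω'' ω) = Φ ω' ω₁ / (∑ ω'' ∈ C, Φ ω'' ω₁)) ∧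
      (∀ ω' ∈ C, 0 ≤ Φ ω' ω / (∑ ω'' ∈ C, Φ ω'' ω)) ∧
      ((∑ ω' ∈ C, Φ ω' ω / (∑ ω'' ∈ C, Φ ω'' ω)) = 1) := by
  intro ω hω ω₁ hω₁
  have hposΦ : ∀ ω' ∈ C, ∀ ω₂ ∈ C, 0 < Φ ω' ω₂ := fun ω' h' ω₂ h₂ =>
    Phi_pos hpos hΦ (hC2 ω' h' ω₂ h₂)
  have hS : ∀ ωb ∈ C, 0 < ∑ ω'' ∈ C, Φ ω'' ωb := fun ωb hb =>
    Finset.sum_pos (fun x hx => hposΦ x hx ωb hb) hC1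
  refine ⟨?_, ?_, ?_⟩
  · intro ω' hω'
    have key : ∀ x ∈ C, Φ x ω = Φ x ω₁ * Φ ω₁ ω := fun x hx =>
      Phi_mul hΦ (hC2 x hx ω₁ hω₁) (hC2 ω₁ hω₁ ω hω)
    have hsum : ∑ ω'' ∈ C, Φ ω'' ω = (∑ ω'' ∈ C, Φ ω'' ω₁) * Φ ω₁ ω := by
      rw [Finset.sum_mul]; exact Finset.sum_congr rfl key
    rw [key ω' hω', hsum, mul_div_mul_right _ _ (ne_of_gt (hposΦ ω₁ hω₁ ω hω))]
  · intro ω' hω'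
    exact div_nonneg (le_of_lt (hposΦ ω' hω' ω hω)) (le_of_lt (hS ω hω))
  · rw [← Finset.sum_div]
    exact div_self (ne_of_gt (hS ω hω))
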